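/- With J = Δ(f)° ∩ ℤⁿ, β_m the g×g matrix with (β_m)_{u,v} = coefficient of x^(m·v − u) in f^(m−1), and γ_i defined from δ_i(f) as in the paper, one has β_{m·p^s} − Σ_{i=1}^{s} γ_i·σ^i(β_{m·p^{s−i}}) ∈ p^s·Mat_{g×g}(R) for all m, s ≥ 1. -/

import Mathlib

open Finsupp Pointwise

namespace BGAux

variable {R : Type*} [CommRing R] {n : ℕ} {p : ℕ}

/-- Representation of a hom sending `single u r` to `single (q • u) (ρ r)`. -/
theorem hom_rep {q : ℤ} (τ : AddMonoidAlgebra R (Fin n → ℤ) →+* AddMonoidAlgebra R (Fin n → ℤ))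
    (ρ : R →+* R)
    (hτ : ∀ (u : Fin n → ℤ) (r : R), τ (AddMonoidAlgebra.single u r) = AddMonoidAlgebra.single (q • u) (ρ r))
    (h : AddMonoidAlgebra R (Fin n → ℤ)) :
    (τ h).coeff = Finsupp.mapDomain (fun y => q • y) (Finsupp.mapRange ρ (map_zero ρ) h.coeff) := by
  induction h using AddMonoidAlgebra.induction_linear with
  | zero => simp
  | add f g hf hg =>
      rw [map_add, AddMonoidAlgebra.coeff_add, hf, hg, AddMonoidAlgebra.coeff_add, Finsupp.mapRange_add (map_add ρ), Finsupp.mapDomain_add]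
  | single a b => rw [hτ, AddMonoidAlgebra.coeff_single, AddMonoidAlgebra.coeff_single, Finsupp.mapRange_single, Finsupp.mapDomain_single]

theorem pow_single (σ : R →+* R)
    (σ' : AddMonoidAlgebra R (Fin n → ℤ) →+* AddMonoidAlgebra R (Fin n → ℤ))
    (hσ' : ∀ (u : Fin n → ℤ) (r : R),
      σ' (AddMonoidAlgebra.single u r) = AddMonoidAlgebra.single ((p : ℤ) • u) (σ r)) (i : ℕ)
    :
    ∀ (u : Fin n → ℤ) (r : R),
    (σ' ^ i) (AddMonoidAlgebra.single u r) = AddMonoidAlgebra.single ((p : ℤ) ^ i • u) ((σ ^ i) r) := by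
  induction i with
  | zero => intro u r; simp
  | succ i ih =>
      intro u r
      have h1 : (σ' ^ (i + 1)) (AddMonoidAlgebra.single u r)
          = (σ' ^ i) (σ' (AddMonoidAlgebra.single u r)) := rfl
      have h2 : (σ ^ i) (σ r) = (σ ^ (i + 1)) r := rfl
      rw [h1, hσ', ih, smul_smul, ← pow_succ, h2]

theorem pow_rep (σ : R →+* R)
    (σ' : AddMonoidAlgebra R (Fin n → ℤ) →+* AddMonoidAlgebra R (Fin n → ℤ))
    (hσ' : ∀ (u : Fin n → ℤ) (r : R),
      σ' (AddMonoidAlgebra.single u r) = AddMonoidAlgebra.single ((p : ℤ) • u) (σ r)) (i : ℕ)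
    (h : AddMonoidAlgebra R (Fin n → ℤ)) :
    ((σ' ^ i) h).coeff = Finsupp.mapDomain (fun y => (p : ℤ) ^ i • y)
      (Finsupp.mapRange (σ ^ i) (map_zero _) h.coeff) :=
  hom_rep _ _ (fun u r => pow_single σ σ' hσ' i u r) h

theorem smul_inj (hp : p.Prime) (i : ℕ) :
    Function.Injective (fun y : Fin n → ℤ => (p : ℤ) ^ i • y) :=
  smul_right_injective _ (pow_ne_zero i (by exact_mod_cast hp.ne_zero))

theorem pow_apply_smul (hp : p.Prime) (σ : R →+* R)
    (σ' : AddMonoidAlgebra R (Fin n → ℤ) →+* AddMonoidAlgebra R (Fin n → ℤ))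
    (hσ' : ∀ (u : Fin n → ℤ) (r : R),
      σ' (AddMonoidAlgebra.single u r) = AddMonoidAlgebra.single ((p : ℤ) • u) (σ r)) (i : ℕ)
    (h : AddMonoidAlgebra R (Fin n → ℤ)) (a : Fin n → ℤ) :
    ((σ' ^ i) h).coeff ((p : ℤ) ^ i • a) = (σ ^ i) (h.coeff a) := by
  rw [pow_rep σ σ' hσ' i, Finsupp.mapDomain_apply (smul_inj hp i), Finsupp.mapRange_apply]



section Generic
variable {S : Type*} [CommRing S] {p : ℕ}

theorem dvd_geom (hp : p.Prime) {a b : S} (h1 : (p : S) ∣ a - b) :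
    (p : S) ∣ ∑ i ∈ Finset.range p, a ^ i * b ^ (p - 1 - i) := by
  have key : ∀ i ∈ Finset.range p, (p : S) ∣ a ^ i * b ^ (p - 1 - i) - b ^ (p - 1) := by
    intro i hi
    rw [Finset.mem_range] at hi
    have hb : b ^ i * b ^ (p - 1 - i) = b ^ (p - 1) := by
      rw [← pow_add]
      congr 1
      omega
    have : a ^ i * b ^ (p - 1 - i) - b ^ (p - 1)
        = (a ^ i - b ^ i) * b ^ (p - 1 - i) := by
      rw [sub_mul, hb]
    rw [this]
    exact (h1.trans (sub_dvd_pow_sub_pow a b i)).mul_right _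
  have h2 : (p : S) ∣ ∑ i ∈ Finset.range p, (a ^ i * b ^ (p - 1 - i) - b ^ (p - 1)) :=
    Finset.dvd_sum key
  have h3 : ∑ i ∈ Finset.range p, (a ^ i * b ^ (p - 1 - i) - b ^ (p - 1))
      = (∑ i ∈ Finset.range p, a ^ i * b ^ (p - 1 - i)) - p * b ^ (p - 1) := by
    rw [Finset.sum_sub_distrib, Finset.sum_const, Finset.card_range, nsmul_eq_mul]
  rw [h3] at h2
  have := h2.add (Dvd.intro _ rfl : (p : S) ∣ (p : S) * b ^ (p - 1))
  simpa using this

theorem dvd_pow_sub_pow (hp : p.Prime) {a b c : S} (h1 : (p : S) ∣ a - b) (h2 : c ∣ a - b) :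
    (p : S) * c ∣ a ^ p - b ^ p := by
  have key : (∑ i ∈ Finset.range p, a ^ i * b ^ (p - 1 - i)) * (a - b) = a ^ p - b ^ p :=
    geom_sum₂_mul a b p
  rw [← key]
  exact mul_dvd_mul (dvd_geom hp h1) h2

theorem dvd_pow_p (hp : p.Prime) {a b : S} (h1 : (p : S) ∣ a - b) :
    (p : S) ∣ a ^ p - b ^ p := by
  have := dvd_pow_sub_pow hp h1 (one_dvd (a - b))
  rwa [mul_one] at this

theorem dvd_lift (hp : p.Prime) {a b : S} (h1 : (p : S) ∣ a - b) (k : ℕ) :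
    (p : S) ^ (k + 1) ∣ a ^ p ^ k - b ^ p ^ k := by
  induction k with
  | zero => simpa using h1
  | succ k ih =>
      have hp1 : (p : S) ∣ a ^ p ^ k - b ^ p ^ k :=
        (dvd_pow_self (p : S) (Nat.succ_ne_zero k)).trans ih
      have := dvd_pow_sub_pow hp hp1 ih
      rw [← pow_mul, ← pow_mul, ← pow_succ] at this
      have e : ((p:S)) ^ (k + 1 + 1) = (p : S) * (p : S) ^ (k + 1) := by ring
      rwa [e]

end Generic


theorem sigma'_congr (hp : p.Prime) (σ : R →+* R)
    (hσ : ∀ r : R, σ r - r ^ p ∈ Ideal.span {(p : R)})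
    (σ' : AddMonoidAlgebra R (Fin n → ℤ) →+* AddMonoidAlgebra R (Fin n → ℤ))
    (hσ' : ∀ (u : Fin n → ℤ) (r : R),
      σ' (AddMonoidAlgebra.single u r) = AddMonoidAlgebra.single ((p : ℤ) • u) (σ r))
    (h : AddMonoidAlgebra R (Fin n → ℤ)) :
    ((p : ℕ) : AddMonoidAlgebra R (Fin n → ℤ)) ∣ σ' h - h ^ p := by
  induction h using AddMonoidAlgebra.induction_linear with
  | zero =>
      rw [map_zero, zero_pow hp.ne_zero, sub_zero]
      exact dvd_zero _
  | add f g hf hg =>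
      obtain ⟨c1, h1⟩ := hf
      obtain ⟨c2, h2⟩ := hg
      obtain ⟨c, hc⟩ := exists_add_pow_prime_eq (R := AddMonoidAlgebra R (Fin n → ℤ)) hp f g
      refine ⟨c1 + c2 - f * g * c, ?_⟩
      rw [map_add]
      push_cast at h1 h2 hc ⊢
      linear_combination h1 + h2 - hc
  | single a b =>
      have hpow : (AddMonoidAlgebra.single a b) ^ p
          = AddMonoidAlgebra.single ((p : ℤ) • a) (b ^ p) := by
        have := AddMonoidAlgebra.single_pow (R := R) (M := Fin n → ℤ) a b p
        rw [← natCast_zsmul a p] at this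
        exact this
      rw [hσ', hpow, ← AddMonoidAlgebra.single_sub]
      obtain ⟨c, hc⟩ := Ideal.mem_span_singleton.mp (hσ b)
      refine ⟨AddMonoidAlgebra.single ((p : ℤ) • a) c, ?_⟩
      rw [hc, AddMonoidAlgebra.natCast_def]
      rw [AddMonoidAlgebra.single_mul_single]
      simp

theorem sigma'_iter_congr (hp : p.Prime) (σ : R →+* R)
    (hσ : ∀ r : R, σ r - r ^ p ∈ Ideal.span {(p : R)})
    (σ' : AddMonoidAlgebra R (Fin n → ℤ) →+* AddMonoidAlgebra R (Fin n → ℤ))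
    (hσ' : ∀ (u : Fin n → ℤ) (r : R),
      σ' (AddMonoidAlgebra.single u r) = AddMonoidAlgebra.single ((p : ℤ) • u) (σ r))
    (i : ℕ) (h : AddMonoidAlgebra R (Fin n → ℤ)) :
    ((p : ℕ) : AddMonoidAlgebra R (Fin n → ℤ)) ∣ (σ' ^ i) h - h ^ p ^ i := by
  induction i with
  | zero => simp
  | succ i ih =>
      have h1 : (σ' ^ (i + 1)) h = σ' ((σ' ^ i) h) := by
        rw [pow_succ', RingHom.mul_def, RingHom.comp_apply]
      have key : (σ' ^ (i + 1)) h - h ^ p ^ (i + 1)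
          = (σ' ((σ' ^ i) h) - ((σ' ^ i) h) ^ p)
            + (((σ' ^ i) h) ^ p - (h ^ p ^ i) ^ p) := by
        rw [h1, ← pow_mul, ← pow_succ]
        ring
      rw [key]
      exact (sigma'_congr hp σ hσ σ' hσ' _).add (dvd_pow_p hp ih)

theorem key_factor (hp : p.Prime) (σ : R →+* R)
    (hσ : ∀ r : R, σ r - r ^ p ∈ Ideal.span {(p : R)})
    (σ' : AddMonoidAlgebra R (Fin n → ℤ) →+* AddMonoidAlgebra R (Fin n → ℤ))
    (hσ' : ∀ (u : Fin n → ℤ) (r : R),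
      σ' (AddMonoidAlgebra.single u r) = AddMonoidAlgebra.single ((p : ℤ) • u) (σ r))
    (i k : ℕ) (g : AddMonoidAlgebra R (Fin n → ℤ)) :
    ((p : ℕ) : AddMonoidAlgebra R (Fin n → ℤ)) ^ (k + 1)
      ∣ (σ' ^ i) (g ^ p ^ k) - g ^ p ^ (i + k) := by
  have h1 : ((p : ℕ) : AddMonoidAlgebra R (Fin n → ℤ)) ∣ (σ' ^ i) g - g ^ p ^ i :=
    sigma'_iter_congr hp σ hσ σ' hσ' i g
  have := dvd_lift hp h1 k
  rwa [← map_pow, ← pow_mul, ← pow_add] at this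



theorem nat_exp (t m₀ : ℕ) (ht : 1 ≤ t) (hm : 1 ≤ m₀) :
    m₀ * t - 1 = (t - 1) + (m₀ - 1) * t := by
  obtain ⟨m', rfl⟩ := Nat.exists_eq_add_of_le hm
  rw [add_mul, one_mul, Nat.add_sub_cancel_left]
  generalize m' * t = k
  omega

section Delta

variable (hp : p.Prime) (σ : R →+* R)
    (hσ : ∀ r : R, σ r - r ^ p ∈ Ideal.span {(p : R)})
    (σ' : AddMonoidAlgebra R (Fin n → ℤ) →+* AddMonoidAlgebra R (Fin n → ℤ))
    (hσ' : ∀ (u : Fin n → ℤ) (r : R),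
      σ' (AddMonoidAlgebra.single u r) = AddMonoidAlgebra.single ((p : ℤ) • u) (σ r))
    (f : AddMonoidAlgebra R (Fin n → ℤ))
    (δ : ℕ → AddMonoidAlgebra R (Fin n → ℤ))
    (hδ : ∀ s : ℕ, 1 ≤ s →
      f ^ (p ^ s - 1) = ∑ i ∈ Finset.Icc 1 s, δ i * (σ' ^ i) (f ^ (p ^ (s - i) - 1)))

include hδ in
theorem delta_eq (k : ℕ) :
    δ (k + 1) = f ^ (p ^ (k + 1) - 1)
      - ∑ i ∈ Finset.Icc 1 k, δ i * (σ' ^ i) (f ^ (p ^ (k + 1 - i) - 1)) := by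
  have h := hδ (k + 1) (by omega)
  rw [Finset.sum_Icc_succ_top (by omega : 1 ≤ k + 1)] at h
  have e : δ (k + 1) * (σ' ^ (k + 1)) (f ^ (p ^ (k + 1 - (k + 1)) - 1)) = δ (k + 1) := by
    rw [Nat.sub_self, pow_zero, Nat.sub_self, pow_zero, map_one, mul_one]
  rw [e] at h
  linear_combination -h

include hp hσ hσ' hδ in
theorem delta_dvd : ∀ s : ℕ, 1 ≤ s → ((p : ℕ) : AddMonoidAlgebra R (Fin n → ℤ)) ^ (s - 1) ∣ δ s := by
  intro s
  induction s using Nat.strong_induction_on with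
  | _ s IH =>
    intro hs
    match s, hs with
    | 1, _ => simpa using one_dvd _
    | (k+2), _ =>
      have hk : 1 ≤ k + 1 := by omega
      show ((p : ℕ) : AddMonoidAlgebra R (Fin n → ℤ)) ^ ((k + 1) + 1 - 1) ∣ δ ((k + 1) + 1)
      rw [delta_eq σ' f δ hδ (k + 1)]
      have h1 : 1 ≤ p ^ (k + 1) := Nat.one_le_pow _ _ hp.pos
      have hmul : f ^ (p ^ ((k + 1) + 1) - 1)
          = ∑ i ∈ Finset.Icc 1 (k + 1), δ i * (σ' ^ i) (f ^ (p ^ ((k + 1) - i) - 1))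
              * f ^ ((p - 1) * p ^ (k + 1)) := by
        have e0 : p ^ ((k + 1) + 1) - 1 = (p ^ (k + 1) - 1) + (p - 1) * p ^ (k + 1) := by
          rw [pow_succ', nat_exp (p ^ (k + 1)) p h1 hp.one_lt.le]
        rw [e0, pow_add, hδ (k + 1) hk, Finset.sum_mul]
      rw [hmul, ← Finset.sum_sub_distrib]
      apply Finset.dvd_sum
      intro i hi
      rw [Finset.mem_Icc] at hi
      have hsplit : (σ' ^ i) (f ^ (p ^ ((k + 1) + 1 - i) - 1))
          = (σ' ^ i) (f ^ (p ^ ((k + 1) - i) - 1)) * (σ' ^ i) (f ^ ((p - 1) * p ^ ((k + 1) - i))) := by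
        rw [← map_mul, ← pow_add]
        congr 2
        have e1 : (k + 1) + 1 - i = ((k + 1) - i) + 1 := by omega
        rw [e1, pow_succ', nat_exp (p ^ ((k + 1) - i)) p (Nat.one_le_pow _ _ hp.pos) hp.one_lt.le]
      have hfac : ((p : ℕ) : AddMonoidAlgebra R (Fin n → ℤ)) ^ ((k + 1) - i + 1)
          ∣ f ^ ((p - 1) * p ^ (k + 1)) - (σ' ^ i) (f ^ ((p - 1) * p ^ ((k + 1) - i))) := by
        have h2 := key_factor hp σ hσ σ' hσ' i ((k + 1) - i) (f ^ (p - 1))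
        rw [← pow_mul, ← pow_mul] at h2
        have e2 : i + ((k + 1) - i) = (k + 1) := by omega
        rw [e2] at h2
        exact dvd_sub_comm.mp h2
      have hdi : ((p : ℕ) : AddMonoidAlgebra R (Fin n → ℤ)) ^ (i - 1) ∣ δ i :=
        IH i (by omega) hi.1
      have e3 : ((p : ℕ) : AddMonoidAlgebra R (Fin n → ℤ)) ^ ((k + 1) + 1 - 1)
          = ((p : ℕ) : AddMonoidAlgebra R (Fin n → ℤ)) ^ (i - 1)
            * ((p : ℕ) : AddMonoidAlgebra R (Fin n → ℤ)) ^ ((k + 1) - i + 1) := by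
        rw [← pow_add]
        congr 1
        omega
      have target_eq : δ i * (σ' ^ i) (f ^ (p ^ ((k + 1) - i) - 1)) * f ^ ((p - 1) * p ^ (k + 1))
            - δ i * (σ' ^ i) (f ^ (p ^ ((k + 1) + 1 - i) - 1))
          = δ i * ((σ' ^ i) (f ^ (p ^ ((k + 1) - i) - 1))
              * (f ^ ((p - 1) * p ^ (k + 1)) - (σ' ^ i) (f ^ ((p - 1) * p ^ ((k + 1) - i))))) := by
        rw [hsplit]; ring
      rw [target_eq, e3]
      exact mul_dvd_mul hdi (hfac.mul_left _)

include hp hσ hσ' hδ in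
theorem poly_congr (m s : ℕ) (hm : 1 ≤ m) (hs : 1 ≤ s) :
    ((p : ℕ) : AddMonoidAlgebra R (Fin n → ℤ)) ^ s
      ∣ f ^ (m * p ^ s - 1)
        - ∑ i ∈ Finset.Icc 1 s, δ i * (σ' ^ i) (f ^ (m * p ^ (s - i) - 1)) := by
  have h1 : 1 ≤ p ^ s := Nat.one_le_pow _ _ hp.pos
  have hmul : f ^ (m * p ^ s - 1)
      = ∑ i ∈ Finset.Icc 1 s, δ i * (σ' ^ i) (f ^ (p ^ (s - i) - 1))
          * f ^ ((m - 1) * p ^ s) := by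
    rw [nat_exp (p ^ s) m h1 hm, pow_add, hδ s hs, Finset.sum_mul]
  rw [hmul, ← Finset.sum_sub_distrib]
  apply Finset.dvd_sum
  intro i hi
  rw [Finset.mem_Icc] at hi
  have hsplit : (σ' ^ i) (f ^ (m * p ^ (s - i) - 1))
      = (σ' ^ i) (f ^ (p ^ (s - i) - 1)) * (σ' ^ i) (f ^ ((m - 1) * p ^ (s - i))) := by
    rw [← map_mul, ← pow_add]
    congr 2
    exact nat_exp (p ^ (s - i)) m (Nat.one_le_pow _ _ hp.pos) hm
  have hfac : ((p : ℕ) : AddMonoidAlgebra R (Fin n → ℤ)) ^ (s - i + 1)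
      ∣ f ^ ((m - 1) * p ^ s) - (σ' ^ i) (f ^ ((m - 1) * p ^ (s - i))) := by
    have h2 := key_factor hp σ hσ σ' hσ' i (s - i) (f ^ (m - 1))
    rw [← pow_mul, ← pow_mul] at h2
    have e2 : i + (s - i) = s := by omega
    rw [e2] at h2
    exact dvd_sub_comm.mp h2
  have hdi : ((p : ℕ) : AddMonoidAlgebra R (Fin n → ℤ)) ^ (i - 1) ∣ δ i :=
    delta_dvd hp σ hσ σ' hσ' f δ hδ i hi.1
  have e3 : ((p : ℕ) : AddMonoidAlgebra R (Fin n → ℤ)) ^ s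
      = ((p : ℕ) : AddMonoidAlgebra R (Fin n → ℤ)) ^ (i - 1)
        * ((p : ℕ) : AddMonoidAlgebra R (Fin n → ℤ)) ^ (s - i + 1) := by
    rw [← pow_add]
    congr 1
    omega
  have target_eq : δ i * (σ' ^ i) (f ^ (p ^ (s - i) - 1)) * f ^ ((m - 1) * p ^ s)
        - δ i * (σ' ^ i) (f ^ (m * p ^ (s - i) - 1))
      = δ i * ((σ' ^ i) (f ^ (p ^ (s - i) - 1))
          * (f ^ ((m - 1) * p ^ s) - (σ' ^ i) (f ^ ((m - 1) * p ^ (s - i))))) := by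
    rw [hsplit]; ring
  rw [target_eq, e3]
  exact mul_dvd_mul hdi (hfac.mul_left _)

end Delta

section Geom

def ι {n : ℕ} : (Fin n → ℤ) → (Fin n → ℝ) := fun w i => (w i : ℝ)

theorem ι_add {n : ℕ} (a b : Fin n → ℤ) : ι (a + b) = ι a + ι b := by
  funext j; simp [ι]

theorem ι_zero {n : ℕ} : ι (0 : Fin n → ℤ) = 0 := by
  funext j; simp [ι]

theorem ι_zsmul {n : ℕ} (z : ℤ) (a : Fin n → ℤ) : ι (z • a) = (z : ℝ) • ι a := by
  funext j; simp [ι]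

theorem supp_pow_mem (f : AddMonoidAlgebra R (Fin n → ℤ))
    (hne : (convexHull ℝ (ι '' (f.coeff.support : Set (Fin n → ℤ)))).Nonempty) (N : ℕ) :
    ∀ a ∈ (f ^ N).coeff.support, ι a ∈ (N : ℝ) • convexHull ℝ (ι '' (f.coeff.support : Set (Fin n → ℤ))) := by
  classical
  induction N with
  | zero =>
      intro a ha
      rw [pow_zero] at ha
      have h0 : a = 0 := by
        have := AddMonoidAlgebra.support_coeff_one_subset ha
        simpa using this
      rw [h0, ι_zero, Nat.cast_zero, Set.zero_smul_set hne]
      exact Set.mem_singleton _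
  | succ N IH =>
      intro a ha
      rw [pow_succ] at ha
      obtain ⟨b, hb, c, hc, rfl⟩ := Finset.mem_add.mp (AddMonoidAlgebra.support_coeff_mul_subset _ _ ha)
      have hb' := IH b hb
      have hc' : ι c ∈ convexHull ℝ (ι '' (f.coeff.support : Set (Fin n → ℤ))) :=
        subset_convexHull _ _ ⟨c, hc, rfl⟩
      have hsplit : ((N + 1 : ℕ) : ℝ) • convexHull ℝ (ι '' (f.coeff.support : Set (Fin n → ℤ)))
          = (N : ℝ) • convexHull ℝ (ι '' (f.coeff.support : Set (Fin n → ℤ)))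
            + (1 : ℝ) • convexHull ℝ (ι '' (f.coeff.support : Set (Fin n → ℤ))) := by
        rw [← Convex.add_smul (convex_convexHull ℝ _) (by positivity) zero_le_one]
        norm_num
      rw [ι_add, hsplit]
      exact Set.add_mem_add hb' (by rwa [one_smul])

theorem sigma_supp (hp : p.Prime) (σ : R →+* R)
    (σ' : AddMonoidAlgebra R (Fin n → ℤ) →+* AddMonoidAlgebra R (Fin n → ℤ))
    (hσ' : ∀ (u : Fin n → ℤ) (r : R),
      σ' (AddMonoidAlgebra.single u r) = AddMonoidAlgebra.single ((p : ℤ) • u) (σ r))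
    (i : ℕ) (h : AddMonoidAlgebra R (Fin n → ℤ)) (a : Fin n → ℤ)
    (ha : a ∈ ((σ' ^ i) h).coeff.support) :
    ∃ y ∈ h.coeff.support, a = (p : ℤ) ^ i • y := by
  classical
  rw [pow_rep σ σ' hσ' i] at ha
  have h2 := Finsupp.mapDomain_support ha
  obtain ⟨y, hy, rfl⟩ := Finset.mem_image.mp h2
  exact ⟨y, Finsupp.support_mapRange hy, rfl⟩

theorem delta_supp (hp : p.Prime) (σ : R →+* R)
    (σ' : AddMonoidAlgebra R (Fin n → ℤ) →+* AddMonoidAlgebra R (Fin n → ℤ))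
    (hσ' : ∀ (u : Fin n → ℤ) (r : R),
      σ' (AddMonoidAlgebra.single u r) = AddMonoidAlgebra.single ((p : ℤ) • u) (σ r))
    (f : AddMonoidAlgebra R (Fin n → ℤ))
    (δ : ℕ → AddMonoidAlgebra R (Fin n → ℤ))
    (hδ : ∀ s : ℕ, 1 ≤ s →
      f ^ (p ^ s - 1) = ∑ i ∈ Finset.Icc 1 s, δ i * (σ' ^ i) (f ^ (p ^ (s - i) - 1)))
    (hne : (convexHull ℝ (ι '' (f.coeff.support : Set (Fin n → ℤ)))).Nonempty) :
    ∀ s : ℕ, 1 ≤ s → ∀ a ∈ (δ s).coeff.support,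
      ι a ∈ (((p ^ s - 1 : ℕ)) : ℝ) • convexHull ℝ (ι '' (f.coeff.support : Set (Fin n → ℤ))) := by
  classical
  intro s
  induction s using Nat.strong_induction_on with
  | _ s IH =>
    intro hs a ha
    match s, hs, ha with
    | 1, _, ha =>
      have h1 : δ 1 = f ^ (p ^ 1 - 1) := by
        have := hδ 1 le_rfl
        simpa using this.symm
      rw [h1] at ha
      exact supp_pow_mem f hne _ a ha
    | (k+2), _, ha =>
      rw [show k + 2 = (k + 1) + 1 from rfl, delta_eq σ' f δ hδ (k + 1), AddMonoidAlgebra.coeff_sub] at ha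
      have hsub := Finsupp.support_sub (by exact ha)
      rw [Finset.mem_union] at hsub
      rcases hsub with h1 | h2
      · exact supp_pow_mem f hne _ a h1
      · rw [AddMonoidAlgebra.coeff_sum] at h2
        have h3 := Finsupp.support_finset_sum h2
        obtain ⟨i, hi, hmem⟩ := Finset.mem_biUnion.mp h3
        rw [Finset.mem_Icc] at hi
        obtain ⟨x, hx, z, hz, rfl⟩ :=
          Finset.mem_add.mp (AddMonoidAlgebra.support_coeff_mul_subset _ _ hmem)
        obtain ⟨y, hy, rfl⟩ := sigma_supp hp σ σ' hσ' i _ z hz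
        have hxx := IH i (by omega) hi.1 x hx
        have hyy := supp_pow_mem f hne _ y hy
        have hzz : ι ((p : ℤ) ^ i • y)
            ∈ ((p : ℝ) ^ i * ((p ^ (k + 2 - i) - 1 : ℕ) : ℝ))
              • convexHull ℝ (ι '' (f.coeff.support : Set (Fin n → ℤ))) := by
          rw [ι_zsmul, ← smul_smul]
          have : ((((p : ℤ) ^ i) : ℤ) : ℝ) = (p : ℝ) ^ i := by push_cast; ring
          rw [this]
          exact Set.smul_mem_smul_set hyy
        have hcast : (((p ^ ((k + 1) + 1) - 1 : ℕ)) : ℝ)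
            = ((p ^ i - 1 : ℕ) : ℝ) + (p : ℝ) ^ i * ((p ^ (k + 2 - i) - 1 : ℕ) : ℝ) := by
          have e1 : 1 ≤ p ^ i := Nat.one_le_pow _ _ hp.pos
          have e2 : 1 ≤ p ^ (k + 2 - i) := Nat.one_le_pow _ _ hp.pos
          have e3 : 1 ≤ p ^ (k + 2) := Nat.one_le_pow _ _ hp.pos
          have e4 : p ^ i * p ^ (k + 2 - i) = p ^ (k + 2) := by
            rw [← pow_add]
            congr 1
            omega
          rw [Nat.cast_sub e3, Nat.cast_sub e1, Nat.cast_sub e2]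
          push_cast [← e4]
          ring
        rw [ι_add, hcast,
          Convex.add_smul (convex_convexHull ℝ _) (by positivity) (by positivity)]
        exact Set.add_mem_add hxx hzz

theorem mem_interior_conv (hp : p.Prime) {i : ℕ} (hi : 1 ≤ i)
    {Δ : Set (Fin n → ℝ)} (hconv : Convex ℝ Δ) {u a w : Fin n → ℤ}
    (hu : ι u ∈ interior Δ) (ha : ι a ∈ ((p ^ i - 1 : ℕ) : ℝ) • Δ)
    (hw : (p : ℤ) ^ i • w = u + a) : ι w ∈ interior Δ := by
  set t : ℝ := (p : ℝ) ^ i with htdef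
  have ht1 : 1 < t := by
    apply one_lt_pow₀ (by exact_mod_cast hp.one_lt) (by omega)
  have ht0 : 0 < t := lt_trans one_pos ht1
  obtain ⟨d, hd, hda⟩ := Set.mem_smul_set.mp ha
  have hc : ((p ^ i - 1 : ℕ) : ℝ) = t - 1 := by
    rw [Nat.cast_sub (Nat.one_le_pow _ _ hp.pos)]
    push_cast
    rfl
  have h1 : t • ι w = ι u + (t - 1) • d := by
    have := congrArg ι hw
    rw [ι_zsmul, ι_add] at this
    have e : (((p : ℤ) ^ i : ℤ) : ℝ) = t := by push_cast; rfl
    rw [e] at this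
    rw [this, ← hda, hc]
  have h2 : ι w = t⁻¹ • ι u + (1 - t⁻¹) • d := by
    have e : ι w = t⁻¹ • (t • ι w) := by
      rw [smul_smul, inv_mul_cancel₀ (ne_of_gt ht0), one_smul]
    rw [e, h1, smul_add, smul_smul]
    congr 1
    have : t⁻¹ * (t - 1) = 1 - t⁻¹ := by field_simp
    rw [this]
  rw [h2]
  exact hconv.combo_interior_self_mem_interior hu hd (inv_pos.mpr ht0)
    (by rw [sub_nonneg]; exact inv_le_one_of_one_le₀ ht1.le) (by ring)

end Geom

theorem conv_apply (x b : AddMonoidAlgebra R (Fin n → ℤ)) (c : Fin n → ℤ) :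
    (x * b).coeff c = ∑ Y ∈ b.coeff.support, x.coeff (c - Y) * b.coeff Y := by
  classical
  simp only [AddMonoidAlgebra.coeff_mul_apply_right, Finsupp.sum, sub_eq_add_neg]

theorem mul_sigma_apply (hp : p.Prime) (σ : R →+* R)
    (σ' : AddMonoidAlgebra R (Fin n → ℤ) →+* AddMonoidAlgebra R (Fin n → ℤ))
    (hσ' : ∀ (u : Fin n → ℤ) (r : R),
      σ' (AddMonoidAlgebra.single u r) = AddMonoidAlgebra.single ((p : ℤ) • u) (σ r))
    (i : ℕ) (a h : AddMonoidAlgebra R (Fin n → ℤ)) (c : Fin n → ℤ) :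
    (a * (σ' ^ i) h).coeff c = ∑ y ∈ h.coeff.support, a.coeff (c - (p : ℤ) ^ i • y) * (σ ^ i) (h.coeff y) := by
  classical
  rw [conv_apply]
  have hsub : ((σ' ^ i) h).coeff.support ⊆ h.coeff.support.image (fun y => (p : ℤ) ^ i • y) := by
    intro Y hY
    obtain ⟨y, hy, rfl⟩ := sigma_supp hp σ σ' hσ' i h Y hY
    exact Finset.mem_image.mpr ⟨y, hy, rfl⟩
  rw [Finset.sum_subset hsub (by
    intro Y _ hY
    rw [Finsupp.notMem_support_iff.mp hY, mul_zero])]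
  rw [Finset.sum_image (fun x _ y _ hxy => smul_inj hp i hxy)]
  apply Finset.sum_congr rfl
  intro y _
  rw [pow_apply_smul hp σ σ' hσ' i h y]

end BGAux

/-- Lemma 3(iii) of the paper:
`β_{m p^s} − Σ_{i=1}^s γ_i · σ^i(β_{m p^{s-i}}) ∈ p^s Mat_{g×g}(R)`. -/
theorem beta_gamma_congruence {R : Type*} [CommRing R] {n : ℕ} (p : ℕ) (hp : p.Prime)
    (hchar : ∀ (N : ℕ) (r : R), N ≠ 0 → (N : ℕ) • r = 0 → r = 0)
    (σ : R →+* R) (hσ : ∀ r : R, σ r - r ^ p ∈ Ideal.span {(p : R)})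
    (σ' : AddMonoidAlgebra R (Fin n → ℤ) →+* AddMonoidAlgebra R (Fin n → ℤ))
    (hσ' : ∀ (u : Fin n → ℤ) (r : R),
      σ' (AddMonoidAlgebra.single u r) = AddMonoidAlgebra.single ((p : ℤ) • u) (σ r))
    (f : AddMonoidAlgebra R (Fin n → ℤ))
    (δ : ℕ → AddMonoidAlgebra R (Fin n → ℤ))
    (hδ : ∀ s : ℕ, 1 ≤ s →
      f ^ (p ^ s - 1) = ∑ i ∈ Finset.Icc 1 s, δ i * (⇑σ')^[i] (f ^ (p ^ (s - i) - 1)))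
    -- `J` is the set of interior lattice points of the Newton polytope of `f`
    (J : Finset (Fin n → ℤ)) (hJne : J.Nonempty)
    (hJ : ∀ u : Fin n → ℤ, u ∈ J ↔ (fun i => (u i : ℝ)) ∈
      interior (convexHull ℝ ((fun (w : Fin n → ℤ) (i : Fin n) => (w i : ℝ)) '' f.coeff.support)))
    -- the matrices β and γ
    (β : ℕ → Matrix J J R) (γ : ℕ → Matrix J J R)
    (hβ : ∀ (m : ℕ) (u v : J), β m u v = (f ^ (m - 1)).coeff ((m : ℤ) • (v : Fin n → ℤ) - u))
    (hγ : ∀ (i : ℕ) (u v : J), γ i u v = (δ i).coeff ((p : ℤ) ^ i • (v : Fin n → ℤ) - u))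
    (m s : ℕ) (hm : 1 ≤ m) (hs : 1 ≤ s) (u v : J) :
    (β (m * p ^ s) - ∑ i ∈ Finset.Icc 1 s, γ i * (β (m * p ^ (s - i))).map (⇑σ)^[i]) u v ∈
      Ideal.span {(p : R) ^ s} := by
  classical
  have hδ2 : ∀ s : ℕ, 1 ≤ s →
      f ^ (p ^ s - 1) = ∑ i ∈ Finset.Icc 1 s, δ i * (σ' ^ i) (f ^ (p ^ (s - i) - 1)) :=
    fun s hs => hδ s hs
  set Δ : Set (Fin n → ℝ) := convexHull ℝ (BGAux.ι '' (f.coeff.support : Set (Fin n → ℤ)))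
    with hΔdef
  have hJ' : ∀ w : Fin n → ℤ, w ∈ J ↔ BGAux.ι w ∈ interior Δ := hJ
  obtain ⟨u0, hu0⟩ := hJne
  have hne : Δ.Nonempty := ⟨_, interior_subset ((hJ' u0).mp hu0)⟩
  have hconv : Convex ℝ Δ := convex_convexHull ℝ _
  set c : Fin n → ℤ := ((m * p ^ s : ℕ) : ℤ) • (v : Fin n → ℤ) - (u : Fin n → ℤ) with hc
  have hentry : ∀ i ∈ Finset.Icc 1 s,
      (γ i * (β (m * p ^ (s - i))).map (⇑σ)^[i]) u v
        = (δ i * (σ' ^ i) (f ^ (m * p ^ (s - i) - 1))).coeff c := by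
    intro i hi
    rw [Finset.mem_Icc] at hi
    set q : ℕ := m * p ^ (s - i) with hq
    have hkey : ∀ w : Fin n → ℤ,
        c - (p : ℤ) ^ i • ((q : ℤ) • (v : Fin n → ℤ) - w) = (p : ℤ) ^ i • w - u := by
      intro w
      have h1 : ((m * p ^ s : ℕ) : ℤ) • (v : Fin n → ℤ)
          = (p : ℤ) ^ i • ((q : ℤ) • (v : Fin n → ℤ)) := by
        rw [smul_smul]
        congr 1
        have h2' : (p : ℤ) ^ i * (p : ℤ) ^ (s - i) = (p : ℤ) ^ s := by
          rw [← pow_add]; congr 1; omega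
        rw [hq]
        push_cast
        rw [← h2']
        ring
      rw [hc, h1, smul_sub]
      abel
    rw [Matrix.mul_apply]
    have hterm : ∀ w : J, γ i u w * ((β q).map (⇑σ)^[i]) w v
        = (fun w' : Fin n → ℤ => (δ i).coeff ((p : ℤ) ^ i • w' - u)
            * (σ ^ i) ((f ^ (q - 1)).coeff ((q : ℤ) • (v : Fin n → ℤ) - w'))) (w : Fin n → ℤ) := by
      intro w
      rw [Matrix.map_apply, hγ i u w, hβ q w v]
      rfl
    rw [Finset.sum_congr rfl (fun w _ => hterm w)]
    rw [Finset.sum_coe_sort J (fun w' : Fin n → ℤ => (δ i).coeff ((p : ℤ) ^ i • w' - u)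
            * (σ ^ i) ((f ^ (q - 1)).coeff ((q : ℤ) • (v : Fin n → ℤ) - w')))]
    rw [BGAux.mul_sigma_apply hp σ σ' hσ' i (δ i) (f ^ (q - 1)) c]
    set F : (Fin n → ℤ) → R := fun y => (δ i).coeff (c - (p : ℤ) ^ i • y)
      * (σ ^ i) ((f ^ (q - 1)).coeff y) with hF
    set e : (Fin n → ℤ) → (Fin n → ℤ) := fun y => (q : ℤ) • (v : Fin n → ℤ) - y with he
    have hinj : Function.Injective e := fun x y hxy => by
      simp only [he] at hxy
      exact sub_right_injective hxy
    have hFe : ∀ w : Fin n → ℤ, (δ i).coeff ((p : ℤ) ^ i • w - u)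
        * (σ ^ i) ((f ^ (q - 1)).coeff ((q : ℤ) • (v : Fin n → ℤ) - w)) = F (e w) := by
      intro w
      simp only [hF, he]
      rw [hkey w]
    have hvan1 : ∀ y ∈ (f ^ (q - 1)).coeff.support ∪ J.image e, y ∉ J.image e → F y = 0 := by
      intro y _ hy
      by_contra hFy
      have hδne : (δ i).coeff (c - (p : ℤ) ^ i • y) ≠ 0 := by
        intro h0
        apply hFy
        simp only [hF, h0, zero_mul]
      set w : Fin n → ℤ := (q : ℤ) • (v : Fin n → ℤ) - y with hw
      have hey : e w = y := by
        simp only [he, hw, sub_sub_cancel]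
      have hvy : (q : ℤ) • (v : Fin n → ℤ) - w = y := by
        rw [hw, sub_sub_cancel]
      have hcy : c - (p : ℤ) ^ i • y = (p : ℤ) ^ i • w - u := by
        rw [← hvy, hkey w]
      have hsupp : (p : ℤ) ^ i • w - (u : Fin n → ℤ) ∈ (δ i).coeff.support :=
        Finsupp.mem_support_iff.mpr (hcy ▸ hδne)
      have hιa := BGAux.delta_supp hp σ σ' hσ' f δ hδ2 hne i hi.1 _ hsupp
      have hιu : BGAux.ι (u : Fin n → ℤ) ∈ interior Δ := (hJ' u).mp u.2
      have hww : (p : ℤ) ^ i • w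
          = (u : Fin n → ℤ) + ((p : ℤ) ^ i • w - (u : Fin n → ℤ)) := by abel
      have hwint := BGAux.mem_interior_conv hp hi.1 hconv hιu hιa hww
      have hwJ : w ∈ J := (hJ' w).mpr hwint
      exact hy (Finset.mem_image.mpr ⟨w, hwJ, hey⟩)
    have hvan2 : ∀ y ∈ (f ^ (q - 1)).coeff.support ∪ J.image e,
        y ∉ (f ^ (q - 1)).coeff.support → F y = 0 := by
      intro y _ hy
      simp only [hF, Finsupp.notMem_support_iff.mp hy, map_zero, mul_zero]
    calc ∑ w ∈ J, (δ i).coeff ((p : ℤ) ^ i • w - u)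
          * (σ ^ i) ((f ^ (q - 1)).coeff ((q : ℤ) • (v : Fin n → ℤ) - w))
        = ∑ w ∈ J, F (e w) := Finset.sum_congr rfl (fun w _ => hFe w)
      _ = ∑ y ∈ J.image e, F y := (Finset.sum_image (fun x _ y _ h => hinj h)).symm
      _ = ∑ y ∈ (f ^ (q - 1)).coeff.support ∪ J.image e, F y :=
          Finset.sum_subset Finset.subset_union_right hvan1
      _ = ∑ y ∈ (f ^ (q - 1)).coeff.support, F y :=
          (Finset.sum_subset Finset.subset_union_left hvan2).symm
  rw [Matrix.sub_apply, Matrix.sum_apply]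
  rw [Finset.sum_congr rfl hentry]
  rw [hβ (m * p ^ s) u v, ← hc]
  have hfinal : (f ^ (m * p ^ s - 1)).coeff c
      - ∑ i ∈ Finset.Icc 1 s, (δ i * (σ' ^ i) (f ^ (m * p ^ (s - i) - 1))).coeff c
      = (f ^ (m * p ^ s - 1)
          - ∑ i ∈ Finset.Icc 1 s, δ i * (σ' ^ i) (f ^ (m * p ^ (s - i) - 1))).coeff c := by
    rw [AddMonoidAlgebra.coeff_sub, AddMonoidAlgebra.coeff_sum, Finsupp.sub_apply, Finsupp.finset_sum_apply]
  rw [hfinal]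
  obtain ⟨E, hE⟩ := BGAux.poly_congr hp σ hσ σ' hσ' f δ hδ2 m s hm hs
  rw [hE]
  have hcoeff : ((((p : ℕ) : AddMonoidAlgebra R (Fin n → ℤ))) ^ s * E).coeff c
      = (p : R) ^ s * E.coeff c := by
    rw [← Nat.cast_pow, AddMonoidAlgebra.natCast_def,
      AddMonoidAlgebra.coeff_single_zero_mul]
    push_cast
    ring
  rw [hcoeff]
  exact Ideal.mem_span_singleton.mpr ⟨E.coeff c, rfl⟩
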